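/- For every integer n ≥ 3, the number of divisors satisfies τ(n) < n^{3/log(log n)}. -/

import Mathlib

/-- Key analytic inequality: `L^2 < e * e^(L/2)` for `L > 3`. -/
lemma tau_key_analytic (L : ℝ) (hL : 3 < L) : L ^ 2 < Real.exp 1 * Real.exp (L / 2) := by
  set t := L - 3 with ht
  have ht0 : 0 < t := by simp only [ht]; linarith
  have h1 : Real.exp 1 * Real.exp (L / 2) = Real.exp (5/2) * Real.exp (t/2) := by
    rw [← Real.exp_add, ← Real.exp_add, ht]; ring_nf
  have hE : (11 : ℝ) < Real.exp (5/2) := by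
    have h2 : Real.exp (5/2) = Real.exp 1 * Real.exp 1 * Real.exp (1/2) := by
      rw [← Real.exp_add, ← Real.exp_add]; norm_num
    have he := Real.exp_one_gt_d9
    have hh : (3/2 : ℝ) ≤ Real.exp (1/2) := by
      have := Real.add_one_le_exp (1/2 : ℝ); linarith
    have hpos : (0:ℝ) < Real.exp 1 := Real.exp_pos 1
    rw [h2]; nlinarith
  have hT : 1 + t/2 + (t/2)^2/2 + (t/2)^3/6 ≤ Real.exp (t/2) := by
    have h4 := Real.sum_le_exp_of_nonneg (by positivity : (0:ℝ) ≤ t/2) 4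
    rw [Finset.sum_range_succ, Finset.sum_range_succ, Finset.sum_range_succ,
      Finset.sum_range_succ, Finset.sum_range_zero] at h4
    norm_num [Nat.factorial] at h4
    convert h4 using 2
  have hL2 : L ^ 2 = (t + 3)^2 := by rw [ht]; ring
  rw [h1, hL2]
  have hX : (0:ℝ) < 1 + t/2 + (t/2)^2/2 + (t/2)^3/6 := by positivity
  calc (t+3)^2 < 11 * (1 + t/2 + (t/2)^2/2 + (t/2)^3/6) := by
        nlinarith [sq_nonneg (t - 2/3), pow_pos ht0 3]
    _ ≤ Real.exp (5/2) * (1 + t/2 + (t/2)^2/2 + (t/2)^3/6) := by nlinarith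
    _ ≤ Real.exp (5/2) * Real.exp (t/2) := by nlinarith [Real.exp_pos (5/2:ℝ)]

theorem tau_simple_bound (n : ℕ) (hn : 3 ≤ n) :
    (n.divisors.card : ℝ) < (n : ℝ) ^ (3 / Real.log (Real.log n)) := by
  have hn0 : n ≠ 0 := by omega
  have hn1R : (1:ℝ) < n := by exact_mod_cast (by omega : 1 < n)
  have hn3R : (3:ℝ) ≤ n := by exact_mod_cast hn
  have hnpos : (0:ℝ) < n := by linarith
  have hlog1 : 1 < Real.log n := by
    have h3 : Real.exp 1 < 3 := by have := Real.exp_one_lt_d9; linarith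
    calc 1 = Real.log (Real.exp 1) := (Real.log_exp 1).symm
      _ < Real.log n := Real.log_lt_log (Real.exp_pos 1) (lt_of_lt_of_le h3 hn3R)
  set L := Real.log (Real.log n) with hLdef
  have hL0 : 0 < L := Real.log_pos hlog1
  have hexpL : Real.exp L = Real.log n := Real.exp_log (by linarith)
  -- τ(n) < n
  have htau_lt_n : (n.divisors.card : ℝ) < n := by
    have hsub : n.divisors ⊂ Finset.Ico 1 (n+1) := by
      constructor
      · intro d hd
        rw [Nat.mem_divisors] at hd
        have h1 := Nat.le_of_dvd (by omega) hd.1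
        have h2 := Nat.pos_of_dvd_of_pos hd.1 (by omega)
        simp only [Finset.mem_Ico]; omega
      · intro hsup
        have hmem : n - 1 ∈ n.divisors := hsup (by simp only [Finset.mem_Ico]; omega)
        rw [Nat.mem_divisors] at hmem
        have h1 : n - 1 ∣ n - (n-1) := Nat.dvd_sub hmem.1 dvd_rfl
        have h2 : n - (n-1) = 1 := by omega
        rw [h2] at h1
        have := Nat.le_of_dvd one_pos h1
        omega
    have hcard := Finset.card_lt_card hsub
    rw [Nat.card_Ico] at hcard
    exact_mod_cast (by omega : n.divisors.card < n)
  by_cases hL3 : L ≤ 3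
  · have h13 : (1:ℝ) ≤ 3 / L := by rw [le_div_iff₀ hL0]; linarith
    calc (n.divisors.card : ℝ) < n := htau_lt_n
      _ = (n:ℝ) ^ (1:ℝ) := (Real.rpow_one _).symm
      _ ≤ (n:ℝ) ^ (3 / L) := Real.rpow_le_rpow_of_exponent_le (le_of_lt hn1R) h13
  · push_neg at hL3
    set ε := 2 / L with hεdef
    have hε0 : 0 < ε := by positivity
    have hlog2 := Real.log_two_gt_d9
    have hlog2' := Real.log_two_lt_d9
    set C := L / (2 * Real.log 2) with hCdef
    have hC1 : 1 < C := by rw [lt_div_iff₀ (by linarith)]; linarith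
    set T := Real.exp (L/2) with hTdef
    have hTpos : 0 < T := Real.exp_pos _
    set S := n.primeFactors with hSdef
    set a : ℕ → ℕ := fun p => n.factorization p with hadef
    set B : ℕ → ℝ := fun p => ((p:ℝ) ^ (a p)) ^ ε with hBdef
    have hppos : ∀ p ∈ S, (0:ℝ) < p := fun p hp => by
      have := (Nat.prime_of_mem_primeFactors hp).two_le
      have : (2:ℝ) ≤ p := by exact_mod_cast this
      linarith
    have hBpos : ∀ p ∈ S, 0 < B p := by
      intro p hp
      have h := hppos p hp
      have : (0:ℝ) < (p:ℝ) ^ (a p) := by positivity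
      exact Real.rpow_pos_of_pos this ε
    have hBexp : ∀ p ∈ S, B p = Real.exp (ε * ((a p : ℝ) * Real.log p)) := by
      intro p hp
      have h := hppos p hp
      have hP : (0:ℝ) < (p:ℝ) ^ (a p) := by positivity
      rw [hBdef]
      simp only
      rw [Real.rpow_def_of_pos hP, Real.log_pow]
      ring_nf
    -- big primes
    have hbig : ∀ p ∈ S, T ≤ (p:ℝ) → ((a p : ℝ) + 1) ≤ B p := by
      intro p hp hpT
      have hlogp : L/2 ≤ Real.log p := by
        rw [← Real.log_exp (L/2)]
        exact Real.log_le_log (Real.exp_pos _) hpT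
      have hkey : (a p : ℝ) ≤ ε * ((a p : ℝ) * Real.log p) := by
        have h2 : (a p:ℝ) * (L/2) ≤ (a p:ℝ) * Real.log p :=
          mul_le_mul_of_nonneg_left hlogp (by positivity)
        calc (a p : ℝ) = ε * ((a p:ℝ) * (L/2)) := by
              rw [hεdef]; field_simp
          _ ≤ ε * ((a p:ℝ) * Real.log p) := mul_le_mul_of_nonneg_left h2 (le_of_lt hε0)
      calc (a p : ℝ) + 1 ≤ Real.exp (a p) := Real.add_one_le_exp _
        _ ≤ Real.exp (ε * ((a p:ℝ) * Real.log p)) := Real.exp_le_exp.mpr hkey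
        _ = B p := (hBexp p hp).symm
    have hsmall : ∀ p ∈ S, ((a p : ℝ) + 1) ≤ C * B p := by
      intro p hp
      have hp2 : (2:ℝ) ≤ p := by exact_mod_cast (Nat.prime_of_mem_primeFactors hp).two_le
      have hlogp : Real.log 2 ≤ Real.log p := Real.log_le_log two_pos hp2
      have h1 : 1 + ε * ((a p:ℝ) * Real.log 2) ≤ B p := by
        rw [hBexp p hp]
        have hmono : ε * ((a p:ℝ) * Real.log 2) ≤ ε * ((a p:ℝ) * Real.log p) :=
          mul_le_mul_of_nonneg_left
            (mul_le_mul_of_nonneg_left hlogp (by positivity)) (le_of_lt hε0)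
        have := Real.add_one_le_exp (ε * ((a p:ℝ) * Real.log 2))
        calc 1 + ε * ((a p:ℝ) * Real.log 2) ≤ Real.exp (ε * ((a p:ℝ) * Real.log 2)) := by
              linarith
          _ ≤ Real.exp (ε * ((a p:ℝ) * Real.log p)) := Real.exp_le_exp.mpr hmono
      have h3 : C * (1 + ε * ((a p:ℝ) * Real.log 2)) = C + (a p : ℝ) := by
        rw [hCdef, hεdef]
        field_simp
      calc (a p : ℝ) + 1 ≤ C + (a p:ℝ) := by linarith
        _ = C * (1 + ε * ((a p:ℝ) * Real.log 2)) := h3.symm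
        _ ≤ C * B p := mul_le_mul_of_nonneg_left h1 (by linarith)
    -- the product formulas
    have hprod1 : (n.divisors.card : ℝ) = ∏ p ∈ S, ((a p : ℝ) + 1) := by
      rw [Nat.card_divisors hn0]
      push_cast
      rfl
    have hprodN : (n:ℝ) = ∏ p ∈ S, (p:ℝ) ^ (a p) := by
      conv_lhs => rw [← Nat.factorization_prod_pow_eq_self hn0]
      rw [Finsupp.prod]
      push_cast
      rfl
    have hprodB : ∏ p ∈ S, B p = (n:ℝ) ^ ε := by
      rw [hBdef]
      simp only
      rw [Real.finset_prod_rpow S _ (fun p hp => by positivity) ε, ← hprodN]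
    set M := (S.filter (fun (p : ℕ) => (p:ℝ) < T)).card with hMdef
    have h45 : ∏ p ∈ S, ((a p:ℝ) + 1) ≤ C ^ M * ∏ p ∈ S, B p := by
      rw [← Finset.prod_filter_mul_prod_filter_not S (fun (p : ℕ) => (p:ℝ) < T)
            (fun p => ((a p:ℝ) + 1)),
          ← Finset.prod_filter_mul_prod_filter_not S (fun (p : ℕ) => (p:ℝ) < T) B,
          ← mul_assoc]
      apply mul_le_mul
      · have hsm : ∏ p ∈ S.filter (fun (p : ℕ) => (p:ℝ) < T), ((a p:ℝ) + 1)
            ≤ ∏ p ∈ S.filter (fun (p : ℕ) => (p:ℝ) < T), (C * B p) := by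
          apply Finset.prod_le_prod (fun p hp => by positivity)
          intro p hp
          exact hsmall p (Finset.filter_subset _ _ hp)
        calc ∏ p ∈ S.filter (fun (p : ℕ) => (p:ℝ) < T), ((a p:ℝ) + 1)
            ≤ ∏ p ∈ S.filter (fun (p : ℕ) => (p:ℝ) < T), (C * B p) := hsm
          _ = C ^ M * ∏ p ∈ S.filter (fun (p : ℕ) => (p:ℝ) < T), B p := by
              rw [Finset.prod_mul_distrib, Finset.prod_const, hMdef]
      · apply Finset.prod_le_prod (fun p hp => by positivity)
        intro p hp
        rw [Finset.mem_filter] at hp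
        exact hbig p hp.1 (le_of_not_gt hp.2)
      · positivity
      · have : 0 < ∏ p ∈ S.filter (fun (p : ℕ) => (p:ℝ) < T), B p :=
          Finset.prod_pos (fun p hp => hBpos p (Finset.filter_subset _ _ hp))
        positivity
    -- M ≤ T
    have hMT : (M:ℝ) ≤ T := by
      have hsub2 : S.filter (fun (p : ℕ) => (p:ℝ) < T) ⊆ Finset.Icc 2 (Nat.floor T) := by
        intro p hp
        rw [Finset.mem_filter] at hp
        rw [Finset.mem_Icc]
        exact ⟨(Nat.prime_of_mem_primeFactors hp.1).two_le,
          Nat.le_floor (le_of_lt hp.2)⟩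
      have hM1 : M ≤ (Finset.Icc 2 (Nat.floor T)).card := Finset.card_le_card hsub2
      rw [Nat.card_Icc] at hM1
      have hM2 : M ≤ Nat.floor T := by omega
      calc (M:ℝ) ≤ (Nat.floor T : ℝ) := by exact_mod_cast hM2
        _ ≤ T := Nat.floor_le (le_of_lt hTpos)
    -- C^M < n^(1/L)
    have hCpos : (0:ℝ) < C := by linarith
    have hCM : (C:ℝ) ^ M < (n:ℝ) ^ (1/L : ℝ) := by
      have s1 : (C:ℝ) ^ M = C ^ ((M:ℕ):ℝ) := (Real.rpow_natCast C M).symm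
      have s2 : C ^ ((M:ℕ):ℝ) ≤ C ^ (T:ℝ) :=
        Real.rpow_le_rpow_of_exponent_le (le_of_lt hC1) hMT
      have s3 : C ^ (T:ℝ) < (n:ℝ) ^ (1/L : ℝ) := by
        rw [Real.rpow_def_of_pos hCpos, Real.rpow_def_of_pos hnpos]
        apply Real.exp_lt_exp.mpr
        have hE1pos : (0:ℝ) < Real.exp 1 := Real.exp_pos 1
        have hlogC : Real.log C ≤ L / Real.exp 1 := by
          have hc2 : C ≤ L := by
            rw [hCdef]
            exact div_le_self (le_of_lt hL0) (by linarith)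
          have hl1 : Real.log C ≤ Real.log L := Real.log_le_log hCpos hc2
          have hl2 : Real.log L ≤ L / Real.exp 1 := by
            have hE1 : Real.log L = 1 + Real.log (L / Real.exp 1) := by
              rw [Real.log_div (ne_of_gt hL0) (ne_of_gt hE1pos), Real.log_exp]; ring
            have h3 := Real.log_le_sub_one_of_pos (show 0 < L / Real.exp 1 by positivity)
            linarith
          linarith
        have hlognT : Real.log n = T * T := by
          rw [← hexpL, hTdef, ← Real.exp_add]; ring_nf
        have hkey := tau_key_analytic L hL3
        have h7 : L * T * L < T * T * Real.exp 1 := by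
          nlinarith [mul_lt_mul_of_pos_right hkey hTpos]
        calc Real.log C * T ≤ (L / Real.exp 1) * T :=
              mul_le_mul_of_nonneg_right hlogC (le_of_lt hTpos)
          _ < Real.log n * (1/L) := by
              rw [hlognT, mul_one_div, div_mul_eq_mul_div, div_lt_div_iff₀ hE1pos hL0]
              linarith [h7]
      calc (C:ℝ) ^ M = C ^ ((M:ℕ):ℝ) := s1
        _ ≤ C ^ (T:ℝ) := s2
        _ < (n:ℝ) ^ (1/L : ℝ) := s3
    have hNε : (0:ℝ) < (n:ℝ) ^ ε := Real.rpow_pos_of_pos hnpos ε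
    calc (n.divisors.card : ℝ) = ∏ p ∈ S, ((a p : ℝ) + 1) := hprod1
      _ ≤ C ^ M * ∏ p ∈ S, B p := h45
      _ = C ^ M * (n:ℝ) ^ ε := by rw [hprodB]
      _ < (n:ℝ) ^ (1/L : ℝ) * (n:ℝ) ^ ε := mul_lt_mul_of_pos_right hCM hNε
      _ = (n:ℝ) ^ (3/L : ℝ) := by
          rw [← Real.rpow_add hnpos, hεdef, ← add_div]
          norm_num
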